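/- arXiv:1810.13084 — 4 statements merged into one kernel-verified Lean document; each statement's English description precedes it below -/
import Mathlib

section
/- The randomized Kaczmarz method applied to a consistent linear system Ax = b, where at each step row i is sampled with probability p_i = ||A_{i:}||^2 / ||A||_F^2 and the update x^{k+1} = x^k - (A_{i:}x^k - b_i)/||A_{i:}||^2 · A_{i:}^T is performed, satisfies E[||x^k - x*||^2] ≤ ρ^k ||x^0 - x*||^2, where ρ = 1 - λ_min^+(A^T A / ||A||_F^2) and x* is the projection of x^0 onto the solution set. -/
open Matrix Finset

lemma rk_dot_symm {m n : ℕ} (A : Matrix (Fin m) (Fin n) ℝ) (z w : Fin n → ℝ) :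
    z ⬝ᵥ ((Aᵀ * A) *ᵥ w) = (A *ᵥ z) ⬝ᵥ (A *ᵥ w) := by
  rw [← mulVec_mulVec, dotProduct_mulVec, vecMul_transpose]

lemma rk_spectral_lb {n : ℕ} (M : Matrix (Fin n) (Fin n) ℝ) (hM : M.IsHermitian) (c : ℝ)
    (hc : ∀ i, hM.eigenvalues i ≠ 0 → c ≤ hM.eigenvalues i)
    (z : Fin n → ℝ)
    (hz : ∀ w, M *ᵥ w = 0 → z ⬝ᵥ w = 0) :
    c * (z ⬝ᵥ z) ≤ z ⬝ᵥ (M *ᵥ z) := by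
  classical
  have hMT : Mᵀ = M := by
    rw [← conjTranspose_eq_transpose_of_trivial]; exact hM
  set u := hM.eigenvectorBasis with hu
  set μ := hM.eigenvalues with hμ
  have hMu : ∀ i, M *ᵥ ⇑(u i) = μ i • ⇑(u i) := fun i => hM.mulVec_eigenvectorBasis i
  have h1 : ∑ i, (z ⬝ᵥ ⇑(u i)) * (⇑(u i) ⬝ᵥ z) = z ⬝ᵥ z := by
    have h := u.sum_inner_mul_inner (WithLp.toLp 2 z) (WithLp.toLp 2 z)
    simp only [PiLp.inner_apply, RCLike.inner_apply, conj_trivial, PiLp.toLp_apply] at h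
    simpa only [dotProduct, mul_comm] using h
  have h2 : ∑ i, (z ⬝ᵥ ⇑(u i)) * (⇑(u i) ⬝ᵥ (M *ᵥ z)) = z ⬝ᵥ (M *ᵥ z) := by
    have h := u.sum_inner_mul_inner (WithLp.toLp 2 z)
      (WithLp.toLp 2 (M *ᵥ z : Fin n → ℝ))
    simp only [PiLp.inner_apply, RCLike.inner_apply, conj_trivial, PiLp.toLp_apply] at h
    simpa only [dotProduct, mul_comm] using h
  have hterm : ∀ i, (⇑(u i) ⬝ᵥ (M *ᵥ z)) = μ i * (⇑(u i) ⬝ᵥ z) := by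
    intro i
    rw [dotProduct_mulVec, ← hMT, vecMul_transpose, hMu i, smul_dotProduct, smul_eq_mul]
  rw [← h1, ← h2, Finset.mul_sum]
  refine Finset.sum_le_sum fun i _ => ?_
  rw [hterm i]
  have hcomm : z ⬝ᵥ ⇑(u i) = ⇑(u i) ⬝ᵥ z := dotProduct_comm _ _
  rw [hcomm]
  by_cases hμi : μ i = 0
  · have hwi : M *ᵥ ⇑(u i) = 0 := by rw [hMu i, hμi, zero_smul]
    have hzi : ⇑(u i) ⬝ᵥ z = 0 := by rw [dotProduct_comm]; exact hz _ hwi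
    simp [hzi]
  · have := hc i hμi
    nlinarith [mul_self_nonneg (⇑(u i) ⬝ᵥ z)]

lemma rk_quad_zero (c W : ℝ) (hW : 0 ≤ W) (h : ∀ t : ℝ, 0 ≤ 2 * t * c + t ^ 2 * W) : c = 0 := by
  have h1 := h (-(c / (W + 1)))
  have hW1 : (0:ℝ) < W + 1 := by linarith
  have heq : 2 * (-(c / (W + 1))) * c + (-(c / (W + 1))) ^ 2 * W
      = -(c ^ 2) * (W + 2) / (W + 1) ^ 2 := by
    field_simp
    ring
  rw [heq] at h1
  have hD : (0:ℝ) < (W + 1) ^ 2 := by positivity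
  have h2 : 0 ≤ -c ^ 2 * (W + 2) := by
    have h3 := mul_nonneg h1 (le_of_lt hD)
    rwa [div_mul_cancel₀ _ (ne_of_gt hD)] at h3
  have hc2 : c ^ 2 ≤ 0 := by nlinarith [h2, sq_nonneg c]
  have : c ^ 2 = 0 := le_antisymm hc2 (sq_nonneg c)
  exact pow_eq_zero_iff (two_ne_zero) |>.mp this

/-- `μ` is an eigenvalue of the real square matrix `M`. -/
def IsEigenvalue {n : ℕ} (M : Matrix (Fin n) (Fin n) ℝ) (μ : ℝ) : Prop :=
  ∃ v : Fin n → ℝ, v ≠ 0 ∧ M.mulVec v = μ • v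

/-- Convergence of the randomized Kaczmarz method: with rows sampled with
probabilities `pᵢ = ‖Aᵢ:‖² / ‖A‖_F²`, the expected squared distance to the
projection `x*` of `x⁰` onto the solution set decays linearly with rate
`ρ = 1 - λ_min⁺(AᵀA / ‖A‖_F²)`. The expectation operator `E k` over the i.i.d.
row choices of the first `k` iterations is characterized recursively. -/
theorem rk_convergence {m n : ℕ} (A : Matrix (Fin m) (Fin n) ℝ) (b : Fin m → ℝ)
    (hrows : ∀ i, A i ≠ 0)
    (hconsistent : ∃ x, A.mulVec x = b)
    (x0 xstar : Fin n → ℝ)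
    (hxstar : A.mulVec xstar = b ∧
      ∀ y, A.mulVec y = b → ∑ j, (xstar j - x0 j) ^ 2 ≤ ∑ j, (y j - x0 j) ^ 2)
    (p : Fin m → ℝ)
    (hp : ∀ i, p i = (∑ j, (A i j) ^ 2) / (∑ i', ∑ j, (A i' j) ^ 2))
    (step : Fin m → (Fin n → ℝ) → (Fin n → ℝ))
    (hstep : ∀ i x, step i x = x - ((A i ⬝ᵥ x - b i) / (∑ j, (A i j) ^ 2)) • (A i))
    (E : ℕ → ((Fin n → ℝ) → ℝ) → ℝ)
    (hE0 : ∀ f, E 0 f = f x0)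
    (hES : ∀ k f, E (k + 1) f = E k (fun x => ∑ i, p i * f (step i x)))
    (lam : ℝ)
    (hlam : IsLeast {μ : ℝ | μ ≠ 0 ∧
      IsEigenvalue ((1 / ∑ i', ∑ j, (A i' j) ^ 2) • (Aᵀ * A)) μ} lam)
    (ρ : ℝ) (hρ : ρ = 1 - lam) :
    ∀ k, E k (fun x => ∑ j, (x j - xstar j) ^ 2) ≤ ρ ^ k * ∑ j, (x0 j - xstar j) ^ 2 := by
  classical
  obtain ⟨⟨hlne, v, hv0, hveq⟩, hlb⟩ := hlam
  obtain ⟨hAxs, hmin⟩ := hxstar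
  set S : ℝ := ∑ i', ∑ j, (A i' j) ^ 2 with hS
  -- S is nonneg
  have hSnn : (0:ℝ) ≤ S := Finset.sum_nonneg fun i _ => Finset.sum_nonneg fun j _ => sq_nonneg _
  by_cases hS0 : S = 0
  · exfalso
    rw [hS0] at hveq
    simp only [div_zero, zero_smul, zero_mulVec] at hveq
    rcases (smul_eq_zero.mp hveq.symm) with h | h
    · exact hlne h
    · exact hv0 h
  have hSpos : 0 < S := lt_of_le_of_ne hSnn (Ne.symm hS0)
  have hNi : ∀ i, 0 < ∑ j, A i j ^ 2 := by
    intro i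
    rcases Function.ne_iff.mp (hrows i) with ⟨j, hj⟩
    refine Finset.sum_pos' (fun j _ => sq_nonneg _) ⟨j, Finset.mem_univ j, ?_⟩
    exact lt_of_le_of_ne (sq_nonneg _) (Ne.symm (pow_ne_zero _ hj))
  have hpnn : ∀ i, 0 ≤ p i := fun i => by
    rw [hp i]; exact div_nonneg (le_of_lt (hNi i)) hSnn
  -- dot self facts
  have hdsnn : ∀ {N : ℕ} (w : Fin N → ℝ), 0 ≤ w ⬝ᵥ w :=
    fun w => Finset.sum_nonneg fun j _ => mul_self_nonneg _
  have hds_sq : ∀ {N : ℕ} (w : Fin N → ℝ), w ⬝ᵥ w = ∑ j, w j ^ 2 := by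
    intro N w; simp [dotProduct, sq]
  -- eigen equation facts for lam
  have hvv : 0 < v ⬝ᵥ v := by
    rcases lt_or_eq_of_le (hdsnn v) with h | h
    · exact h
    · exact absurd (dotProduct_self_eq_zero.mp h.symm) hv0
  have e1 : lam * (v ⬝ᵥ v) = (1/S) * ((A *ᵥ v) ⬝ᵥ (A *ᵥ v)) := by
    have h := congrArg (fun w => v ⬝ᵥ w) hveq
    simp only [smul_mulVec, dotProduct_smul, smul_eq_mul] at h
    rw [rk_dot_symm] at h
    rw [← h]
  have hAvnn : 0 ≤ (A *ᵥ v) ⬝ᵥ (A *ᵥ v) := hdsnn _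
  have hlampos : 0 < lam := by
    have h0 : 0 ≤ lam * (v ⬝ᵥ v) := by
      rw [e1]; exact mul_nonneg (by positivity) hAvnn
    rcases lt_or_eq_of_le (show (0:ℝ) ≤ lam by nlinarith) with h | h
    · exact h
    · exact absurd h.symm hlne
  have hmulvec_sq : ∀ (w : Fin n → ℝ), (A *ᵥ w) ⬝ᵥ (A *ᵥ w) = ∑ i, (A i ⬝ᵥ w) ^ 2 := by
    intro w
    rw [dotProduct]
    exact Finset.sum_congr rfl fun i _ => by rw [← sq]; rfl
  have hlam1 : lam ≤ 1 := by
    have hCS : (A *ᵥ v) ⬝ᵥ (A *ᵥ v) ≤ S * (v ⬝ᵥ v) := by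
      rw [hmulvec_sq, hS, Finset.sum_mul]
      refine Finset.sum_le_sum fun i _ => ?_
      have := Finset.sum_mul_sq_le_sq_mul_sq Finset.univ (A i) v
      rw [hds_sq]
      simpa [dotProduct] using this
    have : lam * (v ⬝ᵥ v) ≤ v ⬝ᵥ v := by
      rw [e1]
      calc (1/S) * ((A *ᵥ v) ⬝ᵥ (A *ᵥ v)) ≤ (1/S) * (S * (v ⬝ᵥ v)) :=
            mul_le_mul_of_nonneg_left hCS (by positivity)
        _ = v ⬝ᵥ v := by field_simp
    nlinarith
  have hρnn : 0 ≤ ρ := by rw [hρ]; linarith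
  -- hermitian matrix
  have hMher : (Aᵀ * A).IsHermitian := by
    rw [← conjTranspose_eq_transpose_of_trivial]
    exact isHermitian_conjTranspose_mul_self A
  have hc : ∀ i, hMher.eigenvalues i ≠ 0 → lam * S ≤ hMher.eigenvalues i := by
    intro i hne
    have hui := hMher.mulVec_eigenvectorBasis i
    have hle : lam ≤ hMher.eigenvalues i / S := by
      apply hlb
      refine ⟨div_ne_zero hne (ne_of_gt hSpos), ⇑(hMher.eigenvectorBasis i), ?_, ?_⟩
      · intro h
        exact hMher.eigenvectorBasis.orthonormal.ne_zero i (by ext j; exact congrFun h j)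
      · show ((1/S) • (Aᵀ * A)) *ᵥ _ = _
        rw [smul_mulVec, hui, smul_smul]
        congr 1
        field_simp
    rwa [le_div_iff₀ hSpos] at hle
  -- spectral inequality for vectors orthogonal to ker A
  have hspec : ∀ z : Fin n → ℝ, (∀ w, A *ᵥ w = 0 → z ⬝ᵥ w = 0) →
      lam * S * (z ⬝ᵥ z) ≤ (A *ᵥ z) ⬝ᵥ (A *ᵥ z) := by
    intro z hperp
    have hker : ∀ w, (Aᵀ * A) *ᵥ w = 0 → z ⬝ᵥ w = 0 := by
      intro w hw
      refine hperp w ?_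
      have h0 : (A *ᵥ w) ⬝ᵥ (A *ᵥ w) = 0 := by rw [← rk_dot_symm, hw, dotProduct_zero]
      exact dotProduct_self_eq_zero.mp h0
    have h := rk_spectral_lb (Aᵀ * A) hMher (lam * S) hc z hker
    rwa [rk_dot_symm] at h
  -- pointwise description of the step
  have hb' : ∀ i, b i = A i ⬝ᵥ xstar := fun i => by rw [← hAxs]; rfl
  have hstep' : ∀ i x j, step i x j - xstar j
      = (x j - xstar j) - ((A i ⬝ᵥ (x - xstar)) / (∑ j', A i j' ^ 2)) * A i j := by
    intro i x j
    rw [hstep]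
    have hd : A i ⬝ᵥ x - b i = A i ⬝ᵥ (x - xstar) := by
      rw [hb' i, ← dotProduct_sub]
    simp only [Pi.sub_apply, Pi.smul_apply, smul_eq_mul]
    rw [hd]
    ring
  have hfi : ∀ i x, ∑ j, (step i x j - xstar j) ^ 2
      = (∑ j, (x j - xstar j) ^ 2) - (A i ⬝ᵥ (x - xstar)) ^ 2 / (∑ j, A i j ^ 2) := by
    intro i x
    have hN := hNi i
    have hexp : ∀ j, (step i x j - xstar j) ^ 2
        = (x j - xstar j) ^ 2
          - (2 * ((A i ⬝ᵥ (x - xstar)) / (∑ j', A i j' ^ 2))) * (A i j * (x j - xstar j))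
          + ((A i ⬝ᵥ (x - xstar)) / (∑ j', A i j' ^ 2)) ^ 2 * A i j ^ 2 := by
      intro j; rw [hstep']; ring
    rw [Finset.sum_congr rfl fun j _ => hexp j]
    rw [Finset.sum_add_distrib, Finset.sum_sub_distrib, ← Finset.mul_sum, ← Finset.mul_sum]
    have hdot : ∑ j, A i j * (x j - xstar j) = A i ⬝ᵥ (x - xstar) := by
      rw [dotProduct]
      exact Finset.sum_congr rfl fun j _ => by rw [Pi.sub_apply]
    rw [hdot]
    field_simp
    ring
  have hones : ∑ i, p i = 1 := by
    simp only [hp]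
    rw [← Finset.sum_div, ← hS, div_self hS0]
  -- one-step contraction
  have hcontract : ∀ x, (∀ w, A *ᵥ w = 0 → (x - xstar) ⬝ᵥ w = 0) →
      ∑ i, p i * ∑ j, (step i x j - xstar j) ^ 2 ≤ ρ * ∑ j, (x j - xstar j) ^ 2 := by
    intro x hperp
    have e2 : ∑ i, p i * ∑ j, (step i x j - xstar j) ^ 2
        = (∑ j, (x j - xstar j) ^ 2) - (1/S) * ∑ i, (A i ⬝ᵥ (x - xstar)) ^ 2 := by
      have hterm : ∀ i, p i * ∑ j, (step i x j - xstar j) ^ 2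
          = p i * (∑ j, (x j - xstar j) ^ 2) - (A i ⬝ᵥ (x - xstar)) ^ 2 / S := by
        intro i
        rw [hfi i x, hp i]
        have hN := hNi i
        field_simp
      rw [Finset.sum_congr rfl fun i _ => hterm i, Finset.sum_sub_distrib, ← Finset.sum_mul,
        hones, one_mul, ← Finset.sum_div]
      ring
    have e3 : ∑ i, (A i ⬝ᵥ (x - xstar)) ^ 2 = (A *ᵥ (x - xstar)) ⬝ᵥ (A *ᵥ (x - xstar)) :=
      (hmulvec_sq _).symm
    have hsp := hspec (x - xstar) hperp
    have hzz : (x - xstar) ⬝ᵥ (x - xstar) = ∑ j, (x j - xstar j) ^ 2 := by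
      rw [hds_sq]
      exact Finset.sum_congr rfl fun j _ => by rw [Pi.sub_apply]
    rw [hzz] at hsp
    have h4 : (1/S) * (lam * S * ∑ j, (x j - xstar j) ^ 2) = lam * ∑ j, (x j - xstar j) ^ 2 := by
      field_simp
    have h5 : (1/S) * (lam * S * ∑ j, (x j - xstar j) ^ 2)
        ≤ (1/S) * ((A *ᵥ (x - xstar)) ⬝ᵥ (A *ᵥ (x - xstar))) :=
      mul_le_mul_of_nonneg_left hsp (by positivity)
    have h6 : ρ * ∑ j, (x j - xstar j) ^ 2
        = (∑ j, (x j - xstar j) ^ 2) - lam * ∑ j, (x j - xstar j) ^ 2 := by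
      rw [hρ]; ring
    rw [e2, e3, h6]
    linarith [h4, h5]
  -- the step preserves orthogonality to ker A
  have hpres : ∀ i x, (∀ w, A *ᵥ w = 0 → (x - xstar) ⬝ᵥ w = 0) →
      ∀ w, A *ᵥ w = 0 → (step i x - xstar) ⬝ᵥ w = 0 := by
    intro i x hx w hw
    have hs : step i x - xstar
        = (x - xstar) - ((A i ⬝ᵥ (x - xstar)) / (∑ j', A i j' ^ 2)) • A i := by
      funext j
      rw [Pi.sub_apply, hstep']
      simp [Pi.sub_apply, Pi.smul_apply, smul_eq_mul]
    rw [hs, sub_dotProduct, smul_dotProduct, smul_eq_mul, hx w hw]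
    have hAiw : A i ⬝ᵥ w = 0 := congrFun hw i
    rw [hAiw, mul_zero, sub_zero]
  -- x0 - xstar is orthogonal to ker A
  have hx0 : ∀ w, A *ᵥ w = 0 → (x0 - xstar) ⬝ᵥ w = 0 := by
    intro w hw
    have hW : (0:ℝ) ≤ ∑ j, w j ^ 2 := Finset.sum_nonneg fun _ _ => sq_nonneg _
    have hkey : ∀ t : ℝ, 0 ≤ 2 * t * (∑ j, w j * (xstar j - x0 j)) + t ^ 2 * ∑ j, w j ^ 2 := by
      intro t
      have hy : A *ᵥ (xstar + t • w) = b := by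
        rw [mulVec_add, mulVec_smul, hw, smul_zero, add_zero, hAxs]
      have h2 := hmin _ hy
      have hexp : ∑ j, ((xstar + t • w) j - x0 j) ^ 2
          = (∑ j, (xstar j - x0 j) ^ 2)
            + (2 * t * (∑ j, w j * (xstar j - x0 j)) + t ^ 2 * ∑ j, w j ^ 2) := by
        have hterm : ∀ j, ((xstar + t • w) j - x0 j) ^ 2
            = (xstar j - x0 j) ^ 2
              + (2 * t * (w j * (xstar j - x0 j)) + t ^ 2 * w j ^ 2) := by
          intro j; simp only [Pi.add_apply, Pi.smul_apply, smul_eq_mul]; ring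
        rw [Finset.sum_congr rfl fun j _ => hterm j, Finset.sum_add_distrib,
          Finset.sum_add_distrib, ← Finset.mul_sum, ← Finset.mul_sum]
      rw [hexp] at h2
      linarith
    have hc0 : (∑ j, w j * (xstar j - x0 j)) = 0 :=
      rk_quad_zero _ _ hW hkey
    have hval : (x0 - xstar) ⬝ᵥ w + (∑ j, w j * (xstar j - x0 j)) = 0 := by
      rw [dotProduct, ← Finset.sum_add_distrib]
      apply Finset.sum_eq_zero
      intro j _
      rw [Pi.sub_apply]
      ring
    rw [hc0, add_zero] at hval
    exact hval
  -- iterating the expectation operator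
  set T : ((Fin n → ℝ) → ℝ) → ((Fin n → ℝ) → ℝ) := fun g x => ∑ i, p i * g (step i x) with hT
  have hiter : ∀ k g, E k g = T^[k] g x0 := by
    intro k
    induction k with
    | zero => intro g; rw [Function.iterate_zero, id_eq]; exact hE0 g
    | succ k ih =>
      intro g
      rw [hES, Function.iterate_succ_apply]
      exact ih (T g)
  have main : ∀ k x, (∀ w, A *ᵥ w = 0 → (x - xstar) ⬝ᵥ w = 0) →
      T^[k] (fun x => ∑ j, (x j - xstar j) ^ 2) x ≤ ρ ^ k * ∑ j, (x j - xstar j) ^ 2 := by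
    intro k
    induction k with
    | zero => intro x hx; rw [Function.iterate_zero, id_eq, pow_zero, one_mul]
    | succ k ih =>
      intro x hx
      rw [Function.iterate_succ_apply']
      calc T (T^[k] (fun x => ∑ j, (x j - xstar j) ^ 2)) x
          = ∑ i, p i * T^[k] (fun x => ∑ j, (x j - xstar j) ^ 2) (step i x) := rfl
        _ ≤ ∑ i, p i * (ρ ^ k * ∑ j, (step i x j - xstar j) ^ 2) :=
            Finset.sum_le_sum fun i _ =>
              mul_le_mul_of_nonneg_left (ih (step i x) (hpres i x hx)) (hpnn i)
        _ = ρ ^ k * ∑ i, p i * ∑ j, (step i x j - xstar j) ^ 2 := by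
            rw [Finset.mul_sum]
            exact Finset.sum_congr rfl fun i _ => by ring
        _ ≤ ρ ^ k * (ρ * ∑ j, (x j - xstar j) ^ 2) :=
            mul_le_mul_of_nonneg_left (hcontract x hx) (pow_nonneg hρnn k)
        _ = ρ ^ (k + 1) * ∑ j, (x j - xstar j) ^ 2 := by ring
  intro k
  rw [hiter k]
  exact main k x0 hx0
end

section
/- For the randomized pairwise gossip algorithm on a connected graph G with m edges, where each iteration an edge (i,j) is picked uniformly at random and x_i, x_j are replaced by their average, one has E[||x^{k+1} - c̄·1||^2 | x^k] ≤ (1 - λ_min^+(L)/(2m)) ||x^k - c̄·1||^2, where L is the graph Laplacian. -/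
open Matrix Finset

private lemma gossip_spectral_aux {n : ℕ} (G : SimpleGraph (Fin n))
    [DecidableRel G.Adj] (hG : G.Connected)
    (lam : ℝ)
    (hlam : IsLeast {μ : ℝ | μ ≠ 0 ∧
      ∃ v : Fin n → ℝ, v ≠ 0 ∧ (G.lapMatrix ℝ).mulVec v = μ • v} lam)
    (y : Fin n → ℝ) (hy : ∑ ℓ, y ℓ = 0) :
    lam * ∑ ℓ, y ℓ ^ 2 ≤ y ⬝ᵥ (G.lapMatrix ℝ) *ᵥ y := by
  classical
  obtain ⟨i0⟩ : Nonempty (Fin n) := hG.nonempty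
  set A := G.lapMatrix ℝ with hA_def
  have hA : A.IsHermitian := (SimpleGraph.posSemidef_lapMatrix ℝ G).1
  have hAt : Aᵀ = A := (Matrix.conjTranspose_eq_transpose_of_trivial A).symm.trans hA
  set b := hA.eigenvectorBasis with hb_def
  set μ := hA.eigenvalues with hμ_def
  set Y : EuclideanSpace ℝ (Fin n) := WithLp.toLp 2 y with hY_def
  have hinner : ∀ u v : EuclideanSpace ℝ (Fin n), (inner ℝ u v : ℝ) = ∑ ℓ, u ℓ * v ℓ := by
    intro u v
    simp [PiLp.inner_apply, RCLike.inner_apply, mul_comm]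
  set c : Fin n → ℝ := fun i => (inner ℝ Y (b i) : ℝ) with hc_def
  -- Parseval
  have parseval : ∑ i, c i * c i = ∑ ℓ, y ℓ ^ 2 := by
    have h := b.sum_inner_mul_inner Y Y
    have h2 : ∀ i, (inner ℝ (b i) Y : ℝ) = c i := fun i => real_inner_comm _ _
    calc ∑ i, c i * c i = ∑ i, (inner ℝ Y (b i) : ℝ) * (inner ℝ (b i) Y : ℝ) := by
          simp_rw [h2]; rfl
      _ = (inner ℝ Y Y : ℝ) := h
      _ = ∑ ℓ, y ℓ ^ 2 := by rw [hinner]; exact Finset.sum_congr rfl fun ℓ _ => (pow_two (y ℓ)).symm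
  -- quadratic form
  set AY : EuclideanSpace ℝ (Fin n) := WithLp.toLp 2 (A *ᵥ y) with hAY_def
  have hbAY : ∀ i, (inner ℝ (b i) AY : ℝ) = μ i * c i := by
    intro i
    have h1 : (inner ℝ (b i) AY : ℝ) = ⇑(b i) ⬝ᵥ (A *ᵥ y) := by
      rw [hinner]; rfl
    rw [h1, dotProduct_mulVec, ← mulVec_transpose, hAt, hA.mulVec_eigenvectorBasis,
      smul_dotProduct]
    congr 1
  have hquad : y ⬝ᵥ A *ᵥ y = ∑ i, μ i * (c i * c i) := by
    have h := b.sum_inner_mul_inner Y AY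
    have h1 : (inner ℝ Y AY : ℝ) = y ⬝ᵥ A *ᵥ y := by rw [hinner]; rfl
    rw [← h1, ← h]
    apply Finset.sum_congr rfl
    intro i _
    rw [hbAY i]
    ring
  -- zero eigenvalue components vanish
  have hzero : ∀ i, μ i = 0 → c i = 0 := by
    intro i hμi
    have h0 : A *ᵥ ⇑(b i) = 0 := by
      rw [hA.mulVec_eigenvectorBasis, show hA.eigenvalues i = 0 from hμi]; simp
    have hconst : ∀ p q : Fin n, G.Reachable p q → b i p = b i q := by
      rw [← SimpleGraph.lapMatrix_mulVec_eq_zero_iff_forall_reachable]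
      exact h0
    have hc : ∀ ℓ, b i ℓ = b i i0 := fun ℓ => hconst ℓ i0 (hG ℓ i0)
    rw [hc_def]
    simp only [hinner]
    calc ∑ ℓ, Y ℓ * b i ℓ = ∑ ℓ, y ℓ * b i i0 := by
          apply Finset.sum_congr rfl; intro ℓ _; rw [hc ℓ]
      _ = (∑ ℓ, y ℓ) * b i i0 := by rw [Finset.sum_mul]
      _ = 0 := by rw [hy, zero_mul]
  -- nonzero eigenvalues are ≥ lam
  have hge : ∀ i, μ i ≠ 0 → lam ≤ μ i := by
    intro i hμi
    apply hlam.2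
    refine ⟨hμi, ⇑(b i), ?_, hA.mulVec_eigenvectorBasis i⟩
    intro h
    apply b.orthonormal.ne_zero i
    ext ℓ
    exact congrFun h ℓ
  calc lam * ∑ ℓ, y ℓ ^ 2 = ∑ i, lam * (c i * c i) := by
        rw [← parseval, Finset.mul_sum]
    _ ≤ ∑ i, μ i * (c i * c i) := by
        apply Finset.sum_le_sum
        intro i _
        rcases eq_or_ne (μ i) 0 with h | h
        · rw [h, hzero i h]; ring_nf; rfl
        · exact mul_le_mul_of_nonneg_right (hge i h) (mul_self_nonneg _)
    _ = y ⬝ᵥ A *ᵥ y := hquad.symm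


/-- One-step expected contraction of randomized pairwise gossip on a connected
graph `G` with `m` edges: picking an edge uniformly at random (equivalently an
ordered adjacent pair, each with probability `1/(2m)`) and averaging its
endpoints, the expected squared distance to consensus contracts by the factor
`1 - λ_min⁺(L)/(2m)` where `L` is the graph Laplacian. -/
theorem gossip_expected_contraction {n : ℕ} (G : SimpleGraph (Fin n))
    [DecidableRel G.Adj] (hG : G.Connected)
    (m : ℕ) (hm : m = G.edgeFinset.card)
    (update : Fin n → Fin n → (Fin n → ℝ) → (Fin n → ℝ))
    (hupdate : ∀ i j x ℓ, update i j x ℓ =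
      if ℓ = i ∨ ℓ = j then (x i + x j) / 2 else x ℓ)
    (lam : ℝ)
    (hlam : IsLeast {μ : ℝ | μ ≠ 0 ∧
      ∃ v : Fin n → ℝ, v ≠ 0 ∧ (G.lapMatrix ℝ).mulVec v = μ • v} lam)
    (x : Fin n → ℝ) (cbar : ℝ) (hcbar : cbar = (∑ ℓ, x ℓ) / n) :
    ∑ q ∈ Finset.univ.filter (fun q : Fin n × Fin n => G.Adj q.1 q.2),
        (1 / (2 * (m : ℝ))) * ∑ ℓ, (update q.1 q.2 x ℓ - cbar) ^ 2
      ≤ (1 - lam / (2 * m)) * ∑ ℓ, (x ℓ - cbar) ^ 2 := by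
  classical
  obtain ⟨i0⟩ : Nonempty (Fin n) := hG.nonempty
  have hn : (0:ℝ) < n := by exact_mod_cast i0.pos
  set P := Finset.univ.filter (fun q : Fin n × Fin n => G.Adj q.1 q.2) with hP_def
  have hcard : P.card = 2 * m := by
    rw [hP_def, hm]
    exact (SimpleGraph.two_mul_card_edgeFinset G).symm
  set y : Fin n → ℝ := fun ℓ => x ℓ - cbar with hy_def
  have hysum : ∑ ℓ, y ℓ = 0 := by
    simp only [hy_def]
    rw [Finset.sum_sub_distrib, Finset.sum_const, Finset.card_univ, Fintype.card_fin, hcbar]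
    rw [nsmul_eq_mul]
    field_simp
    ring
  set S : ℝ := ∑ ℓ, (x ℓ - cbar) ^ 2 with hS_def
  have hS_eq : S = ∑ ℓ, y ℓ ^ 2 := rfl
  -- m is positive
  have hm0 : 0 < m := by
    rcases Nat.eq_zero_or_pos m with h | h
    · exfalso
      have hPempty : P = ∅ := Finset.card_eq_zero.mp (by rw [hcard, h, mul_zero])
      have hnadj : ∀ i j : Fin n, ¬ G.Adj i j := by
        intro i j hadj
        have : (i, j) ∈ P := by
          rw [hP_def, Finset.mem_filter]
          exact ⟨Finset.mem_univ _, hadj⟩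
        rw [hPempty] at this
        exact absurd this (Finset.notMem_empty _)
      obtain ⟨hne, v, hv, hveq⟩ := hlam.1
      have hzero : (G.lapMatrix ℝ).mulVec v = 0 := by
        ext ℓ
        rw [SimpleGraph.lapMatrix_mulVec_apply]
        have hnb : G.neighborFinset ℓ = ∅ := by
          apply Finset.eq_empty_of_forall_notMem
          intro u hu
          exact hnadj ℓ u ((SimpleGraph.mem_neighborFinset G ℓ u).mp hu)
        rw [SimpleGraph.degree, hnb]
        simp
      rw [hzero] at hveq
      rcases smul_eq_zero.mp hveq.symm with h' | h'
      · exact hne h'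
      · exact hv h'
    · exact h
  have hm0' : (0:ℝ) < 2 * m := by positivity
  -- per-pair identity
  have hpair : ∀ i j : Fin n, G.Adj i j →
      ∑ ℓ, (update i j x ℓ - cbar) ^ 2 = S - (x i - x j) ^ 2 / 2 := by
    intro i j hadj
    have hij : i ≠ j := G.ne_of_adj hadj
    have key : ∑ ℓ, ((update i j x ℓ - cbar) ^ 2 - (x ℓ - cbar) ^ 2)
        = -((x i - x j) ^ 2 / 2) := by
      rw [← Finset.sum_subset (Finset.subset_univ ({i, j} : Finset (Fin n)))]
      · rw [Finset.sum_pair hij, hupdate, hupdate,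
          if_pos (Or.inl rfl), if_pos (Or.inr rfl)]
        ring
      · intro ℓ _ hℓ
        have h1 : ¬(ℓ = i ∨ ℓ = j) := by
          simpa [Finset.mem_insert, Finset.mem_singleton] using hℓ
        rw [hupdate, if_neg h1, sub_self]
    have hsplit : ∑ ℓ, ((update i j x ℓ - cbar) ^ 2 - (x ℓ - cbar) ^ 2)
        = (∑ ℓ, (update i j x ℓ - cbar) ^ 2) - S := Finset.sum_sub_distrib _ _
    rw [hsplit] at key
    linarith
  -- the quadratic form
  set Q : ℝ := y ⬝ᵥ (G.lapMatrix ℝ) *ᵥ y with hQ_def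
  have hQsum : ∑ q ∈ P, (x q.1 - x q.2) ^ 2 = 2 * Q := by
    have h1 : ∑ q ∈ P, (x q.1 - x q.2) ^ 2
        = ∑ i : Fin n, ∑ j : Fin n, if G.Adj i j then (y i - y j) ^ 2 else 0 := by
      rw [hP_def, Finset.sum_filter, Fintype.sum_prod_type]
      apply Finset.sum_congr rfl; intro i _
      apply Finset.sum_congr rfl; intro j _
      congr 1
      simp only [hy_def]
      ring
    have h2 := SimpleGraph.lapMatrix_toLinearMap₂' ℝ G y
    rw [Matrix.toLinearMap₂'_apply'] at h2
    rw [h1, hQ_def]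
    linarith [h2]
  -- spectral bound
  have hspec : lam * S ≤ Q := by
    rw [hS_eq]
    exact gossip_spectral_aux G hG lam hlam y hysum
  -- put it together
  have hLHS : ∑ q ∈ P, (1 / (2 * (m : ℝ))) * ∑ ℓ, (update q.1 q.2 x ℓ - cbar) ^ 2
      = S - Q / (2 * m) := by
    have h1 : ∀ q ∈ P, (1 / (2 * (m : ℝ))) * ∑ ℓ, (update q.1 q.2 x ℓ - cbar) ^ 2
        = (1 / (2 * (m : ℝ))) * (S - (x q.1 - x q.2) ^ 2 / 2) := by
      intro q hq
      rw [hP_def, Finset.mem_filter] at hq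
      rw [hpair q.1 q.2 hq.2]
    rw [Finset.sum_congr rfl h1, ← Finset.mul_sum, Finset.sum_sub_distrib,
      Finset.sum_const, nsmul_eq_mul, hcard, ← Finset.sum_div, hQsum]
    push_cast
    field_simp
  rw [hLHS]
  have h2 : lam * S / (2 * (m:ℝ)) ≤ Q / (2 * m) := by gcongr
  have hR : (1 - lam / (2 * (m:ℝ))) * S = S - lam * S / (2 * m) := by ring
  rw [hR]
  linarith [h2]
end

section
/- Define ν = max over u in range(A^T) of u^T [∑_{i=1}^m A_{i:}^T A_{i:} (A^T A)† A_{i:}^T A_{i:}] u / (u^T (A^T A / m) u) for a matrix A with normalized rows (||A_{i:}|| = 1). Then 1 ≤ ν ≤ m/λ_min^+(A^T A). -/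
open Matrix Finset

section KaczmarzHelpers
variable {m n : ℕ}

private lemma hlp_inner_eq_dot (x y : EuclideanSpace ℝ (Fin n)) :
    (inner (𝕜 := ℝ) x y) = (x : Fin n → ℝ) ⬝ᵥ (y : Fin n → ℝ) := by
  simp [PiLp.inner_apply, dotProduct, RCLike.inner_apply]
  exact Finset.sum_congr rfl fun _ _ => mul_comm _ _

private lemma hlp_rayleigh (G : Matrix (Fin n) (Fin n) ℝ) (hG : G.IsHermitian)
    (lam : ℝ)
    (hlow : ∀ μ : ℝ, μ ≠ 0 → ∀ v : Fin n → ℝ, v ≠ 0 → G.mulVec v = μ • v → lam ≤ μ)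
    (w : Fin n → ℝ) :
    lam * (G.mulVec w ⬝ᵥ G.mulVec w) ≤ G.mulVec w ⬝ᵥ G.mulVec (G.mulVec w) := by
  have hGT : Gᵀ = G := by
    ext i j
    have := congrFun (congrFun hG.eq i) j
    simpa [Matrix.conjTranspose_apply] using this
  set q := G.mulVec w with hq
  set b := hG.eigenvectorBasis with hb
  set μ := hG.eigenvalues with hμ
  have hGb : ∀ j, G.mulVec (b j) = μ j • (b j : Fin n → ℝ) := fun j => hG.mulVec_eigenvectorBasis j
  have hsym : ∀ x : Fin n → ℝ, ∀ j,
      (b j : Fin n → ℝ) ⬝ᵥ G.mulVec x = μ j * ((b j : Fin n → ℝ) ⬝ᵥ x) := by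
    intro x j
    rw [Matrix.dotProduct_mulVec, ← Matrix.mulVec_transpose, hGT, hGb j, smul_dotProduct,
      smul_eq_mul]
  have hcoef : ∀ j, μ j = 0 → (b j : Fin n → ℝ) ⬝ᵥ q = 0 := by
    intro j hj
    rw [hq, hsym w j, hj, zero_mul]
  have expand : ∀ x y : Fin n → ℝ,
      x ⬝ᵥ y = ∑ j, (x ⬝ᵥ (b j : Fin n → ℝ)) * ((b j : Fin n → ℝ) ⬝ᵥ y) := by
    intro x y
    have := b.sum_inner_mul_inner (WithLp.toLp 2 x) (WithLp.toLp 2 y)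
    simpa [hlp_inner_eq_dot] using this.symm
  have h1 : q ⬝ᵥ G.mulVec q = ∑ j, μ j * ((b j : Fin n → ℝ) ⬝ᵥ q)^2 := by
    rw [expand q (G.mulVec q)]
    refine Finset.sum_congr rfl fun j _ => ?_
    rw [hsym q j, dotProduct_comm]
    ring
  have h2 : q ⬝ᵥ q = ∑ j, ((b j : Fin n → ℝ) ⬝ᵥ q)^2 := by
    rw [expand q q]
    refine Finset.sum_congr rfl fun j _ => ?_
    rw [dotProduct_comm]
    ring
  rw [h1, h2, Finset.mul_sum]
  refine Finset.sum_le_sum fun j _ => ?_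
  by_cases hj : μ j = 0
  · rw [hcoef j hj, hj]
    simp
  · have hbne : (b j : Fin n → ℝ) ≠ 0 := by
      intro h
      exact b.orthonormal.ne_zero j (by ext k; exact congrFun h k)
    have := hlow (μ j) hj (b j) hbne (hGb j)
    nlinarith [sq_nonneg ((b j : Fin n → ℝ) ⬝ᵥ q)]

private lemma hlp_dot_self_nonneg (x : Fin m → ℝ) : 0 ≤ x ⬝ᵥ x :=
  Finset.sum_nonneg fun i _ => mul_self_nonneg (x i)

private lemma hlp_CS (x y : Fin n → ℝ) : (x ⬝ᵥ y)^2 ≤ (x ⬝ᵥ x) * (y ⬝ᵥ y) := by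
  have := Finset.sum_mul_sq_le_sq_mul_sq Finset.univ x y
  simpa [dotProduct, sq] using this

private lemma hlp_tmul_self_zero (N : Matrix (Fin m) (Fin n) ℝ) (h : Nᵀ * N = 0) : N = 0 := by
  ext i j
  have hd := congrFun (congrFun h j) j
  simp only [Matrix.mul_apply, Matrix.transpose_apply, Matrix.zero_apply] at hd
  have := (Finset.sum_eq_zero_iff_of_nonneg (fun k _ => mul_self_nonneg (N k j))).mp hd i
    (Finset.mem_univ i)
  simpa using mul_self_eq_zero.mp this

private lemma hlp_pinv_symm (G Wd : Matrix (Fin n) (Fin n) ℝ) (hGT : Gᵀ = G)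
    (h1 : G * Wd * G = G) (h2 : Wd * G * Wd = Wd)
    (h3 : (G * Wd)ᵀ = G * Wd) (h4 : (Wd * G)ᵀ = Wd * G) :
    Wdᵀ = Wd := by
  have hy1 : Wdᵀ * G = G * Wd := by
    calc Wdᵀ * G = Wdᵀ * Gᵀ := by rw [hGT]
      _ = (G * Wd)ᵀ := (Matrix.transpose_mul G Wd).symm
      _ = G * Wd := h3
  have hy2 : G * Wdᵀ = Wd * G := by
    calc G * Wdᵀ = Gᵀ * Wdᵀ := by rw [hGT]
      _ = (Wd * G)ᵀ := (Matrix.transpose_mul Wd G).symm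
      _ = Wd * G := h4
  have hY1 : G * Wdᵀ * G = G := by
    have ht : (G * Wd * G)ᵀ = G * Wdᵀ * G := by
      rw [Matrix.transpose_mul, Matrix.transpose_mul, hGT, Matrix.mul_assoc]
    rw [← ht, h1, hGT]
  have hY2 : Wdᵀ * G * Wdᵀ = Wdᵀ := by
    have ht : (Wd * G * Wd)ᵀ = Wdᵀ * G * Wdᵀ := by
      rw [Matrix.transpose_mul, Matrix.transpose_mul, hGT, Matrix.mul_assoc]
    rw [← ht, h2]
  have hy3 : (G * Wdᵀ)ᵀ = G * Wdᵀ := by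
    rw [Matrix.transpose_mul, Matrix.transpose_transpose, hGT, hy2]
  have chain1 : G * Wd = G * Wdᵀ := by
    calc G * Wd = (G * Wd)ᵀ := h3.symm
      _ = (G * Wdᵀ * G * Wd)ᵀ := by rw [hY1]
      _ = ((G * Wdᵀ) * (G * Wd))ᵀ := by rw [Matrix.mul_assoc (G * Wdᵀ) G Wd]
      _ = (G * Wd)ᵀ * (G * Wdᵀ)ᵀ := Matrix.transpose_mul _ _
      _ = (G * Wd) * (G * Wdᵀ) := by rw [h3, hy3]
      _ = (G * Wd * G) * Wdᵀ := by rw [Matrix.mul_assoc (G * Wd) G Wdᵀ]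
      _ = G * Wdᵀ := by rw [h1]
  have hy4 : (Wdᵀ * G)ᵀ = Wdᵀ * G := by
    rw [Matrix.transpose_mul, Matrix.transpose_transpose, hGT, hy1]
  have chain2 : Wd * G = Wdᵀ * G := by
    calc Wd * G = (Wd * G)ᵀ := h4.symm
      _ = (Wd * (G * Wdᵀ * G))ᵀ := by rw [hY1]
      _ = ((Wd * G) * (Wdᵀ * G))ᵀ := by
            rw [show Wd * (G * Wdᵀ * G) = (Wd * G) * (Wdᵀ * G) by noncomm_ring]
      _ = (Wdᵀ * G)ᵀ * (Wd * G)ᵀ := Matrix.transpose_mul _ _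
      _ = (Wdᵀ * G) * (Wd * G) := by rw [h4, hy4]
      _ = Wdᵀ * (G * Wd * G) := by noncomm_ring
      _ = Wdᵀ * G := by rw [h1]
  calc Wdᵀ = Wdᵀ * G * Wdᵀ := hY2.symm
    _ = (Wd * G) * Wdᵀ := by rw [← chain2]
    _ = Wd * (G * Wdᵀ) := Matrix.mul_assoc _ _ _
    _ = Wd * (G * Wd) := by rw [← chain1]
    _ = Wd := by rw [← Matrix.mul_assoc, h2]

private lemma hlp_AWdG (A : Matrix (Fin m) (Fin n) ℝ) (Wd : Matrix (Fin n) (Fin n) ℝ)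
    (h1 : (Aᵀ * A) * Wd * (Aᵀ * A) = Aᵀ * A) (hWdT : Wdᵀ = Wd) :
    A * Wd * (Aᵀ * A) = A := by
  set N := A * Wd * (Aᵀ * A) - A with hN
  have hAN : Aᵀ * N = 0 := by
    have hr : Aᵀ * (A * Wd * (Aᵀ * A)) = Aᵀ * A * Wd * (Aᵀ * A) := by simp [Matrix.mul_assoc]
    rw [hN, Matrix.mul_sub, sub_eq_zero, hr]
    exact h1
  have hNt : Nᵀ = (Aᵀ * A) * Wd * Aᵀ - Aᵀ := by
    rw [hN, Matrix.transpose_sub, Matrix.transpose_mul, Matrix.transpose_mul,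
      Matrix.transpose_mul, Matrix.transpose_transpose, hWdT, Matrix.mul_assoc,
      Matrix.mul_assoc, Matrix.mul_assoc]
  have hNN : Nᵀ * N = 0 := by
    rw [hNt, Matrix.sub_mul, Matrix.mul_assoc ((Aᵀ * A) * Wd) Aᵀ N, hAN]
    simp
  have := hlp_tmul_self_zero N hNN
  rw [hN] at this
  exact sub_eq_zero.mp this

private lemma hlp_vecMulVec_mulVec (x y v : Fin n → ℝ) :
    (vecMulVec x y).mulVec v = (y ⬝ᵥ v) • x := by
  funext j
  simp [Matrix.mulVec, dotProduct, vecMulVec_apply, Finset.mul_sum, mul_comm, mul_assoc,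
    mul_left_comm]

private lemma hlp_dot_sum_mulVec (u v : Fin n → ℝ) (s : Finset (Fin m))
    (M : Fin m → Matrix (Fin n) (Fin n) ℝ) :
    u ⬝ᵥ (∑ i ∈ s, M i).mulVec v = ∑ i ∈ s, u ⬝ᵥ (M i).mulVec v := by
  have h1 : (∑ i ∈ s, M i).mulVec v = ∑ i ∈ s, (M i).mulVec v := by
    funext j
    simp only [Matrix.mulVec, dotProduct, Matrix.sum_apply, Finset.sum_mul, Finset.sum_apply]
    rw [Finset.sum_comm]
  rw [h1]
  simp only [dotProduct, Finset.sum_apply, Finset.mul_sum]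
  rw [Finset.sum_comm]

private lemma hlp_shift (M : Matrix (Fin n) (Fin n) ℝ) (hM : Mᵀ = M) (x y : Fin n → ℝ) :
    M.mulVec x ⬝ᵥ y = x ⬝ᵥ M.mulVec y := by
  conv_rhs => rw [Matrix.dotProduct_mulVec, ← hM, Matrix.vecMul_transpose]

end KaczmarzHelpers

/-- Bounds on the parameter `ν` of accelerated randomized Kaczmarz: for a
matrix `A` with unit-norm rows, with `(AᵀA)†` the Moore–Penrose pseudoinverse
(characterized by the four Penrose conditions) and
`ν = max_{u ∈ range(Aᵀ)} uᵀ[∑ᵢ Aᵢ:ᵀAᵢ: (AᵀA)† Aᵢ:ᵀAᵢ:]u / (uᵀ (AᵀA/m) u)`,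
one has `1 ≤ ν ≤ m/λ_min⁺(AᵀA) = 1/λ_min⁺(W)`. -/
theorem nu_bounds {m n : ℕ} (hm : 0 < m) (A : Matrix (Fin m) (Fin n) ℝ)
    (hrows : ∀ i, A i ⬝ᵥ A i = 1)
    (Wd : Matrix (Fin n) (Fin n) ℝ)
    (hWd1 : (Aᵀ * A) * Wd * (Aᵀ * A) = Aᵀ * A)
    (hWd2 : Wd * (Aᵀ * A) * Wd = Wd)
    (hWd3 : ((Aᵀ * A) * Wd)ᵀ = (Aᵀ * A) * Wd)
    (hWd4 : (Wd * (Aᵀ * A))ᵀ = Wd * (Aᵀ * A))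
    (B : Matrix (Fin n) (Fin n) ℝ)
    (hB : B = ∑ i, vecMulVec (A i) (A i) * Wd * vecMulVec (A i) (A i))
    (ν : ℝ)
    (hν : IsGreatest {r : ℝ | ∃ (u : Fin n → ℝ) (z : Fin m → ℝ), u = Aᵀ.mulVec z ∧ u ≠ 0 ∧
      r = (u ⬝ᵥ B.mulVec u) / (u ⬝ᵥ ((1 / (m : ℝ)) • (Aᵀ * A)).mulVec u)} ν)
    (lam : ℝ)
    (hlam : IsLeast {μ : ℝ | μ ≠ 0 ∧
      ∃ v : Fin n → ℝ, v ≠ 0 ∧ (Aᵀ * A).mulVec v = μ • v} lam) :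
    1 ≤ ν ∧ ν ≤ m / lam := by
  have hGT : (Aᵀ * A)ᵀ = Aᵀ * A := by rw [Matrix.transpose_mul, Matrix.transpose_transpose]
  have hGH : (Aᵀ * A).IsHermitian := by
    show (Aᵀ * A)ᴴ = Aᵀ * A
    have hh : (Aᵀ * A)ᴴ = (Aᵀ * A)ᵀ := by
      ext i j
      simp [Matrix.conjTranspose_apply]
    rw [hh, hGT]
  -- basic dot product identities
  have hGq2 : ∀ x y : Fin n → ℝ, x ⬝ᵥ (Aᵀ * A).mulVec y = A.mulVec x ⬝ᵥ A.mulVec y := by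
    intro x y
    rw [← Matrix.mulVec_mulVec, Matrix.dotProduct_mulVec, Matrix.vecMul_transpose]
  have hGq_nonneg : ∀ x : Fin n → ℝ, 0 ≤ x ⬝ᵥ (Aᵀ * A).mulVec x := by
    intro x
    rw [hGq2]
    exact hlp_dot_self_nonneg _
  -- lam > 0
  obtain ⟨⟨hlamne, v, hvne, hv⟩, hlamlb⟩ := hlam
  have hlampos : 0 < lam := by
    rcases lt_trichotomy lam 0 with h | h | h
    · exfalso
      have h1 : v ⬝ᵥ (Aᵀ * A).mulVec v = lam * (v ⬝ᵥ v) := by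
        rw [hv, dotProduct_smul, smul_eq_mul]
      have h2 : 0 < v ⬝ᵥ v :=
        lt_of_le_of_ne (hlp_dot_self_nonneg _)
          (fun hc => hvne (dotProduct_self_eq_zero.mp hc.symm))
      nlinarith [hGq_nonneg v]
    · exact absurd h hlamne
    · exact h
  have hlow : ∀ μ : ℝ, μ ≠ 0 → ∀ w : Fin n → ℝ, w ≠ 0 → (Aᵀ * A).mulVec w = μ • w → lam ≤ μ :=
    fun μ hμ w hw hev => hlamlb ⟨hμ, w, hw, hev⟩
  -- pseudoinverse facts
  have hWdT : Wdᵀ = Wd := hlp_pinv_symm (Aᵀ * A) Wd hGT hWd1 hWd2 hWd3 hWd4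
  have hAWdG : A * Wd * (Aᵀ * A) = A := hlp_AWdG A Wd hWd1 hWdT
  have hGWdA : (Aᵀ * A) * Wd * Aᵀ = Aᵀ := by
    have ht := congrArg Matrix.transpose hAWdG
    rw [Matrix.transpose_mul, hGT, Matrix.transpose_mul, hWdT, ← Matrix.mul_assoc] at ht
    exact ht
  have hcomm : Wd * (Aᵀ * A) = (Aᵀ * A) * Wd := by
    calc Wd * (Aᵀ * A) = (Wd * (Aᵀ * A))ᵀ := hWd4.symm
      _ = (Aᵀ * A)ᵀ * Wdᵀ := Matrix.transpose_mul _ _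
      _ = (Aᵀ * A) * Wd := by rw [hGT, hWdT]
  have hWfact : Wd = (Aᵀ * A) * (Wd * Wd) := by
    calc Wd = Wd * (Aᵀ * A) * Wd := hWd2.symm
      _ = ((Aᵀ * A) * Wd) * Wd := by rw [hcomm]
      _ = (Aᵀ * A) * (Wd * Wd) := Matrix.mul_assoc _ _ _
  -- row i lies in the range: (AᵀA)Wd fixes it
  have hrowvec : ∀ i, A i = Aᵀ.mulVec (Pi.single i 1) := by
    intro i
    funext j
    simp [Matrix.mulVec, Matrix.transpose_apply]
  have hfix : ∀ i, ((Aᵀ * A) * Wd).mulVec (A i) = A i := by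
    intro i
    rw [hrowvec i, Matrix.mulVec_mulVec, hGWdA]
  -- the key scalar c i
  set c : Fin m → ℝ := fun i => A i ⬝ᵥ Wd.mulVec (A i) with hc
  have hq_range : ∀ i, Wd.mulVec (A i) = (Aᵀ * A).mulVec ((Wd * Wd).mulVec (A i)) := by
    intro i
    rw [Matrix.mulVec_mulVec, ← hWfact]
  have hc_eq : ∀ i, c i = Wd.mulVec (A i) ⬝ᵥ (Aᵀ * A).mulVec (Wd.mulVec (A i)) := by
    intro i
    rw [hlp_shift Wd hWdT, Matrix.mulVec_mulVec, Matrix.mulVec_mulVec, hWd2]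
  have hc_nonneg : ∀ i, 0 ≤ c i := by
    intro i
    rw [hc_eq i, hGq2]
    exact hlp_dot_self_nonneg _
  have hray : ∀ i, lam * (Wd.mulVec (A i) ⬝ᵥ Wd.mulVec (A i)) ≤ c i := by
    intro i
    have h := hlp_rayleigh (Aᵀ * A) hGH lam hlow ((Wd * Wd).mulVec (A i))
    rw [← hq_range i] at h
    rw [hc_eq i]
    exact h
  have hc_le : ∀ i, c i ≤ 1 / lam := by
    intro i
    rw [le_div_iff₀ hlampos]
    have hcs : (c i)^2 ≤ Wd.mulVec (A i) ⬝ᵥ Wd.mulVec (A i) := by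
      have := hlp_CS (A i) (Wd.mulVec (A i))
      rw [hrows i, one_mul] at this
      exact this
    nlinarith [hray i, hc_nonneg i, hlampos,
      mul_le_mul_of_nonneg_left hcs hlampos.le]
  have hc_ge : ∀ i, 1 ≤ (m : ℝ) * c i := by
    intro i
    have hone : (1 : ℝ) = A.mulVec (A i) ⬝ᵥ A.mulVec (Wd.mulVec (A i)) := by
      rw [← hGq2, Matrix.mulVec_mulVec, hfix i, hrows i]
    have hg : A.mulVec (A i) ⬝ᵥ A.mulVec (A i) ≤ (m : ℝ) := by
      have hterm : ∀ j, A.mulVec (A i) j * A.mulVec (A i) j ≤ 1 := by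
        intro j
        have h1 : A.mulVec (A i) j = A j ⬝ᵥ A i := rfl
        have := hlp_CS (A j) (A i)
        rw [hrows i, hrows j, one_mul] at this
        rw [h1]
        calc (A j ⬝ᵥ A i) * (A j ⬝ᵥ A i) = (A j ⬝ᵥ A i)^2 := (sq _).symm
          _ ≤ 1 := this
      calc A.mulVec (A i) ⬝ᵥ A.mulVec (A i) = ∑ j, A.mulVec (A i) j * A.mulVec (A i) j := rfl
        _ ≤ ∑ _j : Fin m, (1 : ℝ) := Finset.sum_le_sum fun j _ => hterm j
        _ = (m : ℝ) := by simp
    have hcs2 : (1 : ℝ) ≤ (A.mulVec (A i) ⬝ᵥ A.mulVec (A i)) * c i := by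
      have h2 := hlp_CS (A.mulVec (A i)) (A.mulVec (Wd.mulVec (A i)))
      have h3 : A.mulVec (Wd.mulVec (A i)) ⬝ᵥ A.mulVec (Wd.mulVec (A i)) = c i := by
        rw [← hGq2, ← hc_eq i]
      rw [← hone, h3, one_pow] at h2
      exact h2
    calc (1 : ℝ) ≤ (A.mulVec (A i) ⬝ᵥ A.mulVec (A i)) * c i := hcs2
      _ ≤ (m : ℝ) * c i := mul_le_mul_of_nonneg_right hg (hc_nonneg i)
  -- quadratic form expansions
  have hBu : ∀ u : Fin n → ℝ, u ⬝ᵥ B.mulVec u = ∑ i, c i * (A i ⬝ᵥ u)^2 := by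
    intro u
    rw [hB, hlp_dot_sum_mulVec]
    refine Finset.sum_congr rfl fun i _ => ?_
    rw [← Matrix.mulVec_mulVec, ← Matrix.mulVec_mulVec, hlp_vecMulVec_mulVec,
      hlp_vecMulVec_mulVec, Matrix.mulVec_smul, dotProduct_smul, dotProduct_smul]
    simp only [hc, smul_eq_mul]
    rw [dotProduct_comm u (A i)]
    ring
  have hGu : ∀ u : Fin n → ℝ, u ⬝ᵥ (Aᵀ * A).mulVec u = ∑ i, (A i ⬝ᵥ u)^2 := by
    intro u
    rw [hGq2]
    refine Finset.sum_congr rfl fun i _ => ?_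
    rw [sq]
    rfl
  -- main argument
  obtain ⟨u, z, huz, hune, hνeq⟩ := hν.1
  set t : Fin m → ℝ := fun i => (A i ⬝ᵥ u)^2 with ht
  have ht_nonneg : ∀ i, 0 ≤ t i := fun i => sq_nonneg _
  have hSpos : 0 < ∑ i, t i := by
    rcases (Finset.sum_nonneg fun i _ => ht_nonneg i).lt_or_eq with h | h
    · exact h
    · exfalso
      have hzero : ∀ i, A i ⬝ᵥ u = 0 := by
        intro i
        have := (Finset.sum_eq_zero_iff_of_nonneg fun i _ => ht_nonneg i).mp h.symm i
          (Finset.mem_univ i)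
        exact pow_eq_zero_iff (by norm_num) |>.mp this
      have huu : u ⬝ᵥ u = 0 := by
        calc u ⬝ᵥ u = u ⬝ᵥ Aᵀ.mulVec z := by rw [← huz]
          _ = (u ᵥ* Aᵀ) ⬝ᵥ z := Matrix.dotProduct_mulVec _ _ _
          _ = A.mulVec u ⬝ᵥ z := by rw [Matrix.vecMul_transpose]
          _ = 0 := by
              refine Finset.sum_eq_zero fun j _ => ?_
              rw [show (A *ᵥ u) j = A j ⬝ᵥ u from rfl, hzero j, zero_mul]
      exact hune (dotProduct_self_eq_zero.mp huu)
  have hD : u ⬝ᵥ ((1 / (m : ℝ)) • (Aᵀ * A)).mulVec u = (1 / (m : ℝ)) * ∑ i, t i := by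
    rw [Matrix.smul_mulVec, dotProduct_smul, smul_eq_mul, hGu]
  have hDpos : 0 < (1 / (m : ℝ)) * ∑ i, t i := by
    apply mul_pos _ hSpos
    positivity
  have hNum : u ⬝ᵥ B.mulVec u = ∑ i, c i * t i := hBu u
  constructor
  · rw [hνeq, hD, hNum, le_div_iff₀ hDpos, one_mul]
    calc (1 / (m : ℝ)) * ∑ i, t i = ∑ i, (1 / (m : ℝ)) * t i := by rw [Finset.mul_sum]
      _ ≤ ∑ i, c i * t i := by
          refine Finset.sum_le_sum fun i _ => ?_
          apply mul_le_mul_of_nonneg_right _ (ht_nonneg i)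
          rw [div_le_iff₀ (by exact_mod_cast hm)]
          linarith [hc_ge i, mul_comm (m : ℝ) (c i)]
  · rw [hνeq, hD, hNum, div_le_iff₀ hDpos]
    have hstep : ∑ i, c i * t i ≤ (1 / lam) * ∑ i, t i := by
      rw [Finset.mul_sum]
      exact Finset.sum_le_sum fun i _ =>
        mul_le_mul_of_nonneg_right (hc_le i) (ht_nonneg i)
    have heq : (m : ℝ) / lam * ((1 / (m : ℝ)) * ∑ i, t i) = (1 / lam) * ∑ i, t i := by
      field_simp
    rw [heq]
    exact hstep
end

section
/- With σ_1 = 1 + √λ/(2m) and σ_2 = 1 - √λ/(2m) for 0 < λ ≤ m^2, the quantity 4λ/(σ_1^{k+1} - σ_2^{k+1})^2 converges to 0 as k → ∞, and asymptotically decreases by a factor σ_1^{-2} per iteration; moreover σ_1^{-2} ≤ 1 - √λ/m + 3λ/(4m^2). -/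
open Filter

/-- With `σ₁ = 1 + √λ/(2m)` and `σ₂ = 1 - √λ/(2m)` for `0 < λ ≤ m²`, the
quantity `4λ/(σ₁^{k+1} - σ₂^{k+1})²` tends to `0`, asymptotically decreases by
the factor `σ₁⁻²` per iteration, and `σ₁⁻² ≤ 1 - √λ/m + 3λ/(4m²)`. -/
theorem liu_wright_asymptotic_rate {m : ℕ} (hm : 0 < m)
    (lam : ℝ) (h1 : 0 < lam) (h2 : lam ≤ (m : ℝ) ^ 2)
    (σ1 σ2 : ℝ)
    (hσ1 : σ1 = 1 + Real.sqrt lam / (2 * m))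
    (hσ2 : σ2 = 1 - Real.sqrt lam / (2 * m)) :
    Tendsto (fun k : ℕ => 4 * lam / (σ1 ^ (k + 1) - σ2 ^ (k + 1)) ^ 2)
      atTop (nhds 0) ∧
    Tendsto (fun k : ℕ => (4 * lam / (σ1 ^ (k + 2) - σ2 ^ (k + 2)) ^ 2) /
        (4 * lam / (σ1 ^ (k + 1) - σ2 ^ (k + 1)) ^ 2))
      atTop (nhds (σ1⁻¹ ^ 2)) ∧
    σ1⁻¹ ^ 2 ≤ 1 - Real.sqrt lam / m + 3 * lam / (4 * m ^ 2) := by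
  have hm' : (0:ℝ) < m := by exact_mod_cast hm
  have ht0 : 0 < Real.sqrt lam := Real.sqrt_pos.mpr h1
  have htm : Real.sqrt lam ≤ m := by
    have := Real.sqrt_le_sqrt h2
    rwa [Real.sqrt_sq hm'.le] at this
  have hs0 : 0 < Real.sqrt lam / (2 * m) := by positivity
  have hs2 : Real.sqrt lam / (2 * m) ≤ 1 / 2 := by
    rw [div_le_div_iff₀ (by positivity) (by norm_num)]; linarith
  have hσ1_gt : 1 < σ1 := by rw [hσ1]; linarith
  have hσ1_pos : 0 < σ1 := by linarith
  have hσ1_ne : σ1 ≠ 0 := ne_of_gt hσ1_pos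
  have hσ2_nonneg : 0 ≤ σ2 := by rw [hσ2]; linarith
  have hσ2_lt1 : σ2 < 1 := by rw [hσ2]; linarith
  have hσ2_lt : σ2 < σ1 := by rw [hσ1, hσ2]; linarith
  have hD : ∀ n : ℕ, 0 < σ1 ^ (n + 1) - σ2 ^ (n + 1) := by
    intro n
    have := pow_lt_pow_left₀ hσ2_lt hσ2_nonneg (Nat.succ_ne_zero n)
    simp only [Nat.succ_eq_add_one] at this
    linarith
  -- Part 1
  have part1 : Tendsto (fun k : ℕ => 4 * lam / (σ1 ^ (k + 1) - σ2 ^ (k + 1)) ^ 2)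
      atTop (nhds 0) := by
    have hT1 : Tendsto (fun n : ℕ => σ1 ^ n) atTop atTop :=
      tendsto_pow_atTop_atTop_of_one_lt hσ1_gt
    have hT2 : Tendsto (fun n : ℕ => -(σ2 ^ n)) atTop (nhds 0) := by
      have := tendsto_pow_atTop_nhds_zero_of_lt_one hσ2_nonneg hσ2_lt1
      simpa using this.neg
    have hTD : Tendsto (fun n : ℕ => σ1 ^ n - σ2 ^ n) atTop atTop := by
      have := hT1.atTop_add hT2
      simpa [sub_eq_add_neg] using this
    have hTD1 : Tendsto (fun k : ℕ => σ1 ^ (k + 1) - σ2 ^ (k + 1)) atTop atTop :=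
      hTD.comp (tendsto_add_atTop_nat 1)
    have hTDsq : Tendsto (fun k : ℕ => (σ1 ^ (k + 1) - σ2 ^ (k + 1)) ^ 2) atTop atTop := by
      have := hTD1.atTop_mul_atTop₀ hTD1
      simpa [sq] using this
    exact Tendsto.div_atTop tendsto_const_nhds hTDsq
  -- Part 2
  have part2 : Tendsto (fun k : ℕ => (4 * lam / (σ1 ^ (k + 2) - σ2 ^ (k + 2)) ^ 2) /
        (4 * lam / (σ1 ^ (k + 1) - σ2 ^ (k + 1)) ^ 2))
      atTop (nhds (σ1⁻¹ ^ 2)) := by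
    have hr0 : 0 ≤ σ2 / σ1 := by positivity
    have hr1 : σ2 / σ1 < 1 := (div_lt_one hσ1_pos).mpr hσ2_lt
    have hrT : Tendsto (fun n : ℕ => (σ2 / σ1) ^ n) atTop (nhds 0) :=
      tendsto_pow_atTop_nhds_zero_of_lt_one hr0 hr1
    have ha : Tendsto (fun k : ℕ => σ1⁻¹ - σ1⁻¹ * (σ2 / σ1) ^ (k + 1)) atTop (nhds σ1⁻¹) := by
      have := ((hrT.comp (tendsto_add_atTop_nat 1)).const_mul σ1⁻¹).const_sub σ1⁻¹
      simpa using this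
    have hb : Tendsto (fun k : ℕ => 1 - (σ2 / σ1) ^ (k + 2)) atTop (nhds 1) := by
      have := (hrT.comp (tendsto_add_atTop_nat 2)).const_sub 1
      simpa using this
    have hdiv : Tendsto (fun k : ℕ =>
        (σ1⁻¹ - σ1⁻¹ * (σ2 / σ1) ^ (k + 1)) / (1 - (σ2 / σ1) ^ (k + 2)))
        atTop (nhds σ1⁻¹) := by
      have := ha.div hb one_ne_zero
      rw [div_one] at this
      exact this
    have hpow := hdiv.pow 2
    refine Tendsto.congr (fun k => ?_) hpow
    have hD1 := hD k
    have hD2 := hD (k + 1)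
    have hD1' : σ1 ^ (k + 1) - σ2 ^ (k + 1) ≠ 0 := ne_of_gt hD1
    have hD2' : σ1 ^ (k + 1 + 1) - σ2 ^ (k + 1 + 1) ≠ 0 := ne_of_gt hD2
    have hD2'' : σ1 ^ (k + 2) - σ2 ^ (k + 2) ≠ 0 := by
      simpa [show k + 1 + 1 = k + 2 by ring] using hD2'
    have hlam : lam ≠ 0 := ne_of_gt h1
    rw [div_pow σ2 σ1, div_pow σ2 σ1]
    field_simp
    ring
  refine ⟨part1, part2, ?_⟩
  -- Part 3
  have hl : Real.sqrt lam ^ 2 = lam := Real.sq_sqrt h1.le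
  have h3 : σ1⁻¹ ^ 2 = 1 / σ1 ^ 2 := by rw [inv_pow, inv_eq_one_div]
  rw [h3, div_le_iff₀ (by positivity)]
  rw [hσ1]
  have hms : (2 * (m:ℝ)) ≠ 0 := by positivity
  field_simp
  set t := Real.sqrt lam with htdef
  rw [← hl]
  nlinarith [mul_pos (mul_pos hm' hm') (mul_pos ht0 (mul_pos ht0 ht0)),
    mul_pos hm' (mul_pos (mul_pos ht0 ht0) (mul_pos ht0 ht0))]
end
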